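/- Define G(w) = (1/4)·log 21 − log 2 − (3/4)·log w and H(w) = (√21/4)·log w for w > 0. Then for all w > 0: (i) H'(w) = √w·e^{2G(w)}, and (ii) G''(w) + G'(w)² − H'(w)² = 0. -/

import Mathlib

lemma hasDerivG (w : ℝ) (hw : 0 < w) :
    HasDerivAt (fun w => (1 / 4) * Real.log 21 - Real.log 2 - (3 / 4) * Real.log w)
      (-(3 / 4) * w⁻¹) w := by
  have h := ((Real.hasDerivAt_log hw.ne').const_mul (3 / 4 : ℝ)).const_sub
    ((1 / 4) * Real.log 21 - Real.log 2)
  simpa [sub_sub, neg_mul] using h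

lemma derivG (w : ℝ) (hw : 0 < w) :
    deriv (fun w => (1 / 4) * Real.log 21 - Real.log 2 - (3 / 4) * Real.log w) w
      = -(3 / 4) * w⁻¹ := (hasDerivG w hw).deriv

lemma derivH (w : ℝ) (hw : 0 < w) :
    deriv (fun w => (Real.sqrt 21 / 4) * Real.log w) w = (Real.sqrt 21 / 4) * w⁻¹ :=
  (((Real.hasDerivAt_log hw.ne').const_mul (Real.sqrt 21 / 4))).deriv

/-- The domain-wall profile functions `G(w) = (1/4)log 21 − log 2 − (3/4)log w`,
`H(w) = (√21/4)log w` satisfy, for `w > 0`: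
(i) `H' = √w·e^{2G}` and (ii) `G'' + G'² − H'² = 0`. -/
theorem domain_wall_profile_functions :
    let G : ℝ → ℝ := fun w => (1 / 4) * Real.log 21 - Real.log 2 - (3 / 4) * Real.log w
    let H : ℝ → ℝ := fun w => (Real.sqrt 21 / 4) * Real.log w
    ∀ w : ℝ, 0 < w →
      (deriv H w = Real.sqrt w * Real.exp (2 * G w)) ∧
      (deriv (deriv G) w + (deriv G w) ^ 2 - (deriv H w) ^ 2 = 0) := by
  intro G H w hw
  have h21 : (0:ℝ) < 21 := by norm_num
  constructor
  · rw [derivH w hw]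
    have : Real.exp (2 * G w) = Real.sqrt 21 / 4 * w⁻¹ * (Real.sqrt w)⁻¹ := by
      show Real.exp (2 * ((1 / 4) * Real.log 21 - Real.log 2 - (3 / 4) * Real.log w)) = _
      have hln21 : Real.log 21 = Real.log (Real.sqrt 21 ^ 2) := by
        rw [Real.sq_sqrt h21.le]
      have hlnw : Real.log w = Real.log (Real.sqrt w ^ 2) := by
        rw [Real.sq_sqrt hw.le]
      have hs21 : (0:ℝ) < Real.sqrt 21 := Real.sqrt_pos.mpr h21
      have hsw : (0:ℝ) < Real.sqrt w := Real.sqrt_pos.mpr hw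
      rw [hln21, hlnw, Real.log_pow, Real.log_pow]
      push_cast
      have : 2 * ((1 / 4) * (2 * Real.log (Real.sqrt 21)) - Real.log 2
          - (3 / 4) * (2 * Real.log (Real.sqrt w)))
          = Real.log (Real.sqrt 21) - 2 * Real.log 2 - 3 * Real.log (Real.sqrt w) := by ring
      rw [this, Real.exp_sub, Real.exp_sub, Real.exp_log hs21]
      rw [show (2:ℝ) * Real.log 2 = Real.log (2^2) by rw [Real.log_pow]; push_cast; ring,
          show (3:ℝ) * Real.log (Real.sqrt w) = Real.log (Real.sqrt w ^ 3) by
            rw [Real.log_pow]; push_cast; ring,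
          Real.exp_log (by norm_num), Real.exp_log (by positivity)]
      have hw32 : Real.sqrt w ^ 3 = w * Real.sqrt w := by
        rw [pow_succ, Real.sq_sqrt hw.le]
      rw [hw32]
      field_simp
      ring
    rw [this]
    have hsw : (0:ℝ) < Real.sqrt w := Real.sqrt_pos.mpr hw
    field_simp
  · have hG' : deriv (deriv G) w = 3 / 4 * (w ^ 2)⁻¹ := by
      have hev : deriv G =ᶠ[nhds w] fun x => -(3 / 4) * x⁻¹ := by
        filter_upwards [eventually_gt_nhds hw] with x hx using derivG x hx
      rw [hev.deriv_eq]
      have : HasDerivAt (fun x : ℝ => -(3 / 4) * x⁻¹)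
          (-(3 / 4) * (-(w ^ 2)⁻¹)) w := by
        simpa using (hasDerivAt_inv hw.ne').const_mul (-(3 / 4) : ℝ)
      rw [this.deriv]; ring
    rw [hG', derivG w hw, derivH w hw]
    have h21' : Real.sqrt 21 ^ 2 = 21 := Real.sq_sqrt h21.le
    field_simp
    nlinarith [Real.sq_sqrt h21.le, sq_nonneg w]
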